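/- With the setup of the measurement lemma: Tr(Eρ) = 1/2 if and only if neither P nor -P lies in S. -/

import Mathlib

open Matrix

noncomputable def σI : Matrix (Fin 2) (Fin 2) ℂ := 1
noncomputable def σX : Matrix (Fin 2) (Fin 2) ℂ := !![0, 1; 1, 0]
noncomputable def σY : Matrix (Fin 2) (Fin 2) ℂ := !![0, -Complex.I; Complex.I, 0]
noncomputable def σZ : Matrix (Fin 2) (Fin 2) ℂ := !![1, 0; 0, -1]

/-- The four single-qubit Pauli matrices. -/
def PauliOps : Set (Matrix (Fin 2) (Fin 2) ℂ) := {σI, σX, σY, σZ}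

/-- Allowed global phases. -/
def Phases : Set ℂ := {1, -1, Complex.I, -Complex.I}

/-- The matrix on (ℂ²)^⊗n given by the tensor product P 0 ⊗ ⋯ ⊗ P (n-1). -/
noncomputable def pauliTensor (n : ℕ) (P : Fin n → Matrix (Fin 2) (Fin 2) ℂ) :
    Matrix (Fin n → Fin 2) (Fin n → Fin 2) ℂ :=
  Matrix.of fun f g => ∏ i, P i (f i) (g i)

/-- The n-qubit Pauli group: all c • (P¹ ⊗ ⋯ ⊗ Pⁿ) with c ∈ {±1, ±i}, Pⁱ ∈ {I,X,Y,Z}. -/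
def PauliGroup (n : ℕ) : Set (Matrix (Fin n → Fin 2) (Fin n → Fin 2) ℂ) :=
  {M | ∃ (c : ℂ) (P : Fin n → Matrix (Fin 2) (Fin 2) ℂ),
    c ∈ Phases ∧ (∀ i, P i ∈ PauliOps) ∧ M = c • pauliTensor n P}

/-- Abbreviation for n-qubit operators. -/
abbrev MatN (n : ℕ) := Matrix (Fin n → Fin 2) (Fin n → Fin 2) ℂ


section Aux
open Finset
-- Phases characterisation
lemma mem_Phases_iff {c : ℂ} : c ∈ Phases ↔ c ^ 4 = 1 := by
  constructor
  · rintro (rfl|rfl|rfl|rfl) <;> norm_num [pow_succ, Complex.I_mul_I] <;>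
      simp [Complex.ext_iff] <;> ring_nf <;> simp [Complex.I_sq] <;> norm_num
  · intro h
    simp only [Phases, Set.mem_insert_iff, Set.mem_singleton_iff]
    have h4 : (c^2 - 1) * (c^2 + 1) = 0 := by ring_nf; linear_combination h
    rcases mul_eq_zero.1 h4 with h2 | h2
    · have : (c - 1) * (c + 1) = 0 := by linear_combination h2
      rcases mul_eq_zero.1 this with h1 | h1
      · exact Or.inl (by linear_combination h1)
      · exact Or.inr (Or.inl (by linear_combination h1))
    · have : (c - Complex.I) * (c + Complex.I) = 0 := by
        have : Complex.I ^ 2 = -1 := Complex.I_sq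
        linear_combination h2 - this
      rcases mul_eq_zero.1 this with h1 | h1
      · exact Or.inr (Or.inr (Or.inl (by linear_combination h1)))
      · exact Or.inr (Or.inr (Or.inr (by linear_combination h1)))

lemma Phases.mul {c d : ℂ} (hc : c ∈ Phases) (hd : d ∈ Phases) : c * d ∈ Phases := by
  rw [mem_Phases_iff] at *; rw [mul_pow, hc, hd, one_mul]

lemma Phases.prod {n : ℕ} {c : Fin n → ℂ} (hc : ∀ i, c i ∈ Phases) : (∏ i, c i) ∈ Phases := by
  rw [mem_Phases_iff, ← Finset.prod_pow]
  exact Finset.prod_eq_one fun i _ => mem_Phases_iff.1 (hc i)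

-- single-qubit Pauli facts
lemma pauli_sq {A : Matrix (Fin 2) (Fin 2) ℂ} (hA : A ∈ PauliOps) : A * A = 1 := by
  rcases hA with rfl|rfl|rfl|rfl
  · simp [σI]
  all_goals
    ext i j; fin_cases i <;> fin_cases j <;>
      simp [σX, σY, σZ, Matrix.mul_apply, Fin.sum_univ_two, Matrix.one_apply]

lemma pauli_herm {A : Matrix (Fin 2) (Fin 2) ℂ} (hA : A ∈ PauliOps) : Aᴴ = A := by
  rcases hA with rfl|rfl|rfl|rfl
  · simp [σI]
  all_goals ext i j; fin_cases i <;> fin_cases j <;> simp [σX, σY, σZ]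

lemma pauli_trace {A : Matrix (Fin 2) (Fin 2) ℂ} (hA : A ∈ PauliOps) : A = 1 ∨ A.trace = 0 := by
  rcases hA with rfl|rfl|rfl|rfl
  · exact Or.inl rfl
  all_goals exact Or.inr (by simp [σX, σY, σZ, Matrix.trace_fin_two])

lemma pauli_mul {A B : Matrix (Fin 2) (Fin 2) ℂ} (hA : A ∈ PauliOps) (hB : B ∈ PauliOps) :
    ∃ c ∈ Phases, ∃ C ∈ PauliOps, A * B = c • C := by
  have h1 : (1:ℂ) ∈ Phases := Or.inl rfl
  have hn1 : (-1:ℂ) ∈ Phases := Or.inr (Or.inl rfl)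
  have hi : (Complex.I:ℂ) ∈ Phases := Or.inr (Or.inr (Or.inl rfl))
  have hni : (-Complex.I:ℂ) ∈ Phases := Or.inr (Or.inr (Or.inr rfl))
  have pI : σI ∈ PauliOps := Or.inl rfl
  have pX : σX ∈ PauliOps := Or.inr (Or.inl rfl)
  have pY : σY ∈ PauliOps := Or.inr (Or.inr (Or.inl rfl))
  have pZ : σZ ∈ PauliOps := Or.inr (Or.inr (Or.inr rfl))
  rcases hA with rfl|rfl|rfl|rfl <;> rcases hB with rfl|rfl|rfl|rfl
  · exact ⟨1, h1, σI, pI, by simp [σI]⟩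
  · exact ⟨1, h1, σX, pX, by simp [σI]⟩
  · exact ⟨1, h1, σY, pY, by simp [σI]⟩
  · exact ⟨1, h1, σZ, pZ, by simp [σI]⟩
  · exact ⟨1, h1, σX, pX, by simp [σI]⟩
  · exact ⟨1, h1, σI, pI, by rw [pauli_sq pX]; simp [σI]⟩
  · exact ⟨Complex.I, hi, σZ, pZ, by
      ext i j; fin_cases i <;> fin_cases j <;>
        simp [σX, σY, σZ, Matrix.mul_apply, Fin.sum_univ_two]⟩
  · exact ⟨-Complex.I, hni, σY, pY, by
      ext i j; fin_cases i <;> fin_cases j <;>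
        simp [σX, σY, σZ, Matrix.mul_apply, Fin.sum_univ_two]⟩
  · exact ⟨1, h1, σY, pY, by simp [σI]⟩
  · exact ⟨-Complex.I, hni, σZ, pZ, by
      ext i j; fin_cases i <;> fin_cases j <;>
        simp [σX, σY, σZ, Matrix.mul_apply, Fin.sum_univ_two]⟩
  · exact ⟨1, h1, σI, pI, by rw [pauli_sq pY]; simp [σI]⟩
  · exact ⟨Complex.I, hi, σX, pX, by
      ext i j; fin_cases i <;> fin_cases j <;>
        simp [σX, σY, σZ, Matrix.mul_apply, Fin.sum_univ_two]⟩
  · exact ⟨1, h1, σZ, pZ, by simp [σI]⟩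
  · exact ⟨Complex.I, hi, σY, pY, by
      ext i j; fin_cases i <;> fin_cases j <;>
        simp [σX, σY, σZ, Matrix.mul_apply, Fin.sum_univ_two]⟩
  · exact ⟨-Complex.I, hni, σX, pX, by
      ext i j; fin_cases i <;> fin_cases j <;>
        simp [σX, σY, σZ, Matrix.mul_apply, Fin.sum_univ_two]⟩
  · exact ⟨1, h1, σI, pI, by rw [pauli_sq pZ]; simp [σI]⟩

lemma pauliTensor_mul (Pf Q : Fin n → Matrix (Fin 2) (Fin 2) ℂ) :
    pauliTensor n Pf * pauliTensor n Q = pauliTensor n (fun i => Pf i * Q i) := by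
  ext f g
  simp only [pauliTensor, Matrix.mul_apply, Matrix.of_apply, ← Finset.prod_mul_distrib]
  exact (Fintype.prod_sum fun i x => Pf i (f i) x * Q i x (g i)).symm

lemma pauliTensor_one : pauliTensor n (fun _ => (1 : Matrix (Fin 2) (Fin 2) ℂ)) = 1 := by
  ext f g
  by_cases h : f = g
  · subst h; simp [pauliTensor, Matrix.one_apply]
  · obtain ⟨i, hi⟩ := Function.ne_iff.1 h
    simp only [pauliTensor, Matrix.of_apply, Matrix.one_apply, h, if_false]
    exact Finset.prod_eq_zero (Finset.mem_univ i) (by simp [Matrix.one_apply, hi])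

lemma pauliTensor_smul (c : Fin n → ℂ) (R : Fin n → Matrix (Fin 2) (Fin 2) ℂ) :
    pauliTensor n (fun i => c i • R i) = (∏ i, c i) • pauliTensor n R := by
  ext f g
  simp [pauliTensor, Finset.prod_mul_distrib]

lemma trace_pauliTensor (Pf : Fin n → Matrix (Fin 2) (Fin 2) ℂ) :
    (pauliTensor n Pf).trace = ∏ i, (Pf i).trace := by
  simp only [Matrix.trace, Matrix.diag, pauliTensor, Matrix.of_apply]
  exact (Fintype.prod_sum fun i x => Pf i x x).symm

lemma pauliTensor_conjTranspose (Pf : Fin n → Matrix (Fin 2) (Fin 2) ℂ) :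
    (pauliTensor n Pf)ᴴ = pauliTensor n (fun i => (Pf i)ᴴ) := by
  ext f g
  simp [pauliTensor, Matrix.conjTranspose_apply, map_prod]

lemma pauliTensor_ne_zero (Pf : Fin n → Matrix (Fin 2) (Fin 2) ℂ)
    (h : ∀ i, ∃ x y, Pf i x y ≠ 0) : pauliTensor n Pf ≠ 0 := by
  choose x y hxy using h
  intro hz
  have := congrFun (congrFun hz x) y
  simp only [pauliTensor, Matrix.of_apply, Matrix.zero_apply] at this
  exact (Finset.prod_ne_zero_iff.2 fun i _ => hxy i) this

lemma pauliGroup_mul {n : ℕ} {A B : MatN n} (hA : A ∈ PauliGroup n) (hB : B ∈ PauliGroup n) :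
    A * B ∈ PauliGroup n := by
  obtain ⟨c, Pf, hc, hPf, rfl⟩ := hA
  obtain ⟨d, Q, hd, hQ, rfl⟩ := hB
  have h := fun i => pauli_mul (hPf i) (hQ i)
  choose e he R hR hmul using h
  refine ⟨c * d * ∏ i, e i, R, Phases.mul (Phases.mul hc hd) (Phases.prod he), hR, ?_⟩
  rw [Matrix.smul_mul, Matrix.mul_smul, pauliTensor_mul, smul_smul]
  have : (fun i => Pf i * Q i) = fun i => e i • R i := funext hmul
  rw [this, pauliTensor_smul, smul_smul]

lemma pauliGroup_trace_dichotomy {n : ℕ} {M : MatN n} (hM : M ∈ PauliGroup n) :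
    M.trace = 0 ∨ ∃ c ∈ Phases, M = c • (1 : MatN n) := by
  obtain ⟨c, Pf, hc, hPf, rfl⟩ := hM
  by_cases h : ∀ i, Pf i = 1
  · right
    refine ⟨c, hc, ?_⟩
    have : Pf = fun _ => (1 : Matrix (Fin 2) (Fin 2) ℂ) := funext h
    rw [this, pauliTensor_one]
  · left
    push_neg at h
    obtain ⟨i, hi⟩ := h
    have h0 : (Pf i).trace = 0 := (pauli_trace (hPf i)).resolve_left hi
    rw [Matrix.trace_smul, trace_pauliTensor, smul_eq_mul,
      Finset.prod_eq_zero (Finset.mem_univ i) h0, mul_zero]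

lemma pauli_entry_ne {A : Matrix (Fin 2) (Fin 2) ℂ} (hA : A ∈ PauliOps) : ∃ x y, A x y ≠ 0 := by
  rcases hA with rfl|rfl|rfl|rfl
  · exact ⟨0, 0, by simp [σI]⟩
  · exact ⟨0, 1, by simp [σX]⟩
  · exact ⟨1, 0, by simp [σY, Complex.I_ne_zero]⟩
  · exact ⟨0, 0, by simp [σZ]⟩

lemma pauliGroup_herm_sq {n : ℕ} {P : MatN n} (hP : P ∈ PauliGroup n) (hPh : P.IsHermitian) :
    P * P = 1 := by
  obtain ⟨c, Pf, hc, hPf, rfl⟩ := hP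
  set T := pauliTensor n Pf with hT
  have hTh : Tᴴ = T := by
    rw [hT, pauliTensor_conjTranspose]
    exact congrArg (pauliTensor n) (funext fun i => pauli_herm (hPf i))
  have hTsq : T * T = 1 := by
    rw [hT, pauliTensor_mul]
    have : (fun i => Pf i * Pf i) = fun _ => (1 : Matrix (Fin 2) (Fin 2) ℂ) :=
      funext fun i => pauli_sq (hPf i)
    rw [this, pauliTensor_one]
  have hTne : T ≠ 0 := pauliTensor_ne_zero Pf fun i => pauli_entry_ne (hPf i)
  have hcr : (starRingEnd ℂ) c = c := by
    have h1 : (c • T)ᴴ = c • T := hPh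
    rw [Matrix.conjTranspose_smul, hTh] at h1
    by_contra hne
    exact hTne (by
      have := sub_eq_zero.2 h1
      rw [← sub_smul] at this
      exact (smul_eq_zero.1 this).resolve_left (sub_ne_zero.2 hne))
  have hc2 : c ^ 2 = 1 := by
    have h4 := mem_Phases_iff.1 hc
    rcases hc with rfl|rfl|rfl|rfl
    · norm_num
    · norm_num
    · exact absurd hcr (by norm_num [Complex.ext_iff])
    · exact absurd hcr (by norm_num [Complex.ext_iff])
  rw [Matrix.smul_mul, Matrix.mul_smul, hTsq, smul_smul, ← pow_two, hc2, one_smul]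

end Aux

/-- Measurement lemma, case analysis for Tr(Eρ) with E = (I+P)/2 and
ρ = (1/2ⁿ) ∑_{S∈𝒮} S for a stabiliser group 𝒮. -/
theorem trace_eq_half_iff_not_mem_stabiliser {n : ℕ} (S : Subgroup (MatN n)ˣ) [Fintype S]
    (hsub : ∀ g ∈ S, ((g : (MatN n)ˣ) : MatN n) ∈ PauliGroup n)
    (habel : ∀ a ∈ S, ∀ b ∈ S, a * b = b * a)
    (hneg : ∀ g ∈ S, ((g : (MatN n)ˣ) : MatN n) ≠ -1)
    (P : MatN n) (hP : P ∈ PauliGroup n) (hPh : P.IsHermitian)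
    (hP1 : P ≠ 1) (hPn1 : P ≠ -1)
    (E : MatN n) (hE : E = (2⁻¹ : ℂ) • ((1 : MatN n) + P))
    (ρ : MatN n) (hρ : ρ = ((2 : ℂ) ^ n)⁻¹ • ∑ s : S, ((s : (MatN n)ˣ) : MatN n)) :
    (E * ρ).trace = 1/2 ↔
      ((∀ u ∈ S, ((u : (MatN n)ˣ) : MatN n) ≠ P) ∧ (∀ u ∈ S, ((u : (MatN n)ˣ) : MatN n) ≠ -P)) := by
  classical
  set T : MatN n := ∑ s : S, ((s : (MatN n)ˣ) : MatN n) with hT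
  have hPP : P * P = 1 := pauliGroup_herm_sq hP hPh
  have htrone : (1 : MatN n).trace = (2 : ℂ) ^ n := by
    rw [Matrix.trace_one]
    simp [Fintype.card_fun]
  have hscalar : ∀ s : S, ∀ c ∈ Phases, ((s : (MatN n)ˣ) : MatN n) = c • 1 → c = 1 := by
    intro s c hc hs
    rcases hc with rfl | rfl | rfl | rfl
    · rfl
    · exact absurd (by rw [hs]; simp) (hneg _ s.2)
    · exact absurd (by
        rw [Units.val_mul, hs]
        simp [Matrix.smul_mul, Matrix.mul_smul, smul_smul, Complex.I_mul_I])
        (hneg _ (mul_mem s.2 s.2))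
    · exact absurd (by
        rw [Units.val_mul, hs]
        simp [Matrix.smul_mul, Matrix.mul_smul, smul_smul, Complex.I_mul_I])
        (hneg _ (mul_mem s.2 s.2))
  have hρtr : T.trace = (2 : ℂ) ^ n := by
    rw [hT, Matrix.trace_sum, Finset.sum_eq_single_of_mem (1 : S) (Finset.mem_univ _)]
    · simp [htrone]
    · intro s _ hs1
      rcases pauliGroup_trace_dichotomy (hsub _ s.2) with h | ⟨c, hc, hcs⟩
      · exact h
      · exact absurd (Subtype.ext (Units.ext (by
          rw [hcs, hscalar s c hc hcs, one_smul]; rfl))) hs1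
  have htri : ∀ s : S, (P * ((s : (MatN n)ˣ) : MatN n)).trace = 0 ∨
      ((s : (MatN n)ˣ) : MatN n) = P ∨ ((s : (MatN n)ˣ) : MatN n) = -P := by
    intro s
    rcases pauliGroup_trace_dichotomy (pauliGroup_mul hP (hsub _ s.2)) with h | ⟨c, hc, hcs⟩
    · exact Or.inl h
    · have hs : ((s : (MatN n)ˣ) : MatN n) = c • P := by
        have h2 := congrArg (fun M => P * M) hcs
        simp only [← Matrix.mul_assoc, hPP, Matrix.one_mul] at h2
        rw [h2, Matrix.mul_smul, Matrix.mul_one]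
      rcases hc with rfl | rfl | rfl | rfl
      · exact Or.inr (Or.inl (by rw [hs, one_smul]))
      · exact Or.inr (Or.inr (by rw [hs, neg_smul, one_smul]))
      · exact absurd (by
          rw [Units.val_mul, hs]
          simp [Matrix.smul_mul, Matrix.mul_smul, smul_smul, Complex.I_mul_I, hPP])
          (hneg _ (mul_mem s.2 s.2))
      · exact absurd (by
          rw [Units.val_mul, hs]
          simp [Matrix.smul_mul, Matrix.mul_smul, smul_smul, Complex.I_mul_I, hPP])
          (hneg _ (mul_mem s.2 s.2))
  have hPT : (P * T).trace = ∑ s : S, (P * ((s : (MatN n)ˣ) : MatN n)).trace := by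
    rw [hT, Finset.mul_sum, Matrix.trace_sum]
  have hEρ : (E * ρ).trace = 2⁻¹ * (((2 : ℂ) ^ n)⁻¹ * (T.trace + (P * T).trace)) := by
    rw [hE, hρ, Matrix.smul_mul, Matrix.mul_smul, Matrix.add_mul, Matrix.one_mul,
      Matrix.trace_smul, Matrix.trace_smul, Matrix.trace_add]
    simp [smul_eq_mul]
  have h2n : ((2 : ℂ) ^ n) ≠ 0 := pow_ne_zero _ two_ne_zero
  by_cases hp : ∃ u ∈ S, ((u : (MatN n)ˣ) : MatN n) = P
  · obtain ⟨u, hu, huP⟩ := hp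
    have hsum : ∑ s : S, (P * ((s : (MatN n)ˣ) : MatN n)).trace = (2 : ℂ) ^ n := by
      rw [Finset.sum_eq_single_of_mem (⟨u, hu⟩ : S) (Finset.mem_univ _)]
      · show (P * ((u : (MatN n)ˣ) : MatN n)).trace = _
        rw [huP, hPP, htrone]
      · intro s _ hs1
        rcases htri s with h | h | h
        · exact h
        · exact absurd (Subtype.ext (Units.ext (h.trans huP.symm))) hs1
        · exact absurd (by
            rw [Units.val_mul]
            show ((u : (MatN n)ˣ) : MatN n) * _ = _
            rw [huP, h, Matrix.mul_neg, hPP])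
            (hneg _ (mul_mem hu s.2))
    have hval : (E * ρ).trace = 1 := by
      rw [hEρ, hρtr, hPT, hsum]
      field_simp
      norm_num
    rw [hval]
    constructor
    · intro h; norm_num at h
    · rintro ⟨h1, _⟩; exact absurd huP (h1 u hu)
  · by_cases hm : ∃ u ∈ S, ((u : (MatN n)ˣ) : MatN n) = -P
    · obtain ⟨u, hu, huP⟩ := hm
      push_neg at hp
      have hsum : ∑ s : S, (P * ((s : (MatN n)ˣ) : MatN n)).trace = -((2 : ℂ) ^ n) := by
        rw [Finset.sum_eq_single_of_mem (⟨u, hu⟩ : S) (Finset.mem_univ _)]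
        · show (P * ((u : (MatN n)ˣ) : MatN n)).trace = _
          rw [huP, Matrix.mul_neg, hPP, Matrix.trace_neg, htrone]
        · intro s _ hs1
          rcases htri s with h | h | h
          · exact h
          · exact absurd h (hp _ s.2)
          · exact absurd (Subtype.ext (Units.ext (h.trans huP.symm))) hs1
      have hval : (E * ρ).trace = 0 := by
        rw [hEρ, hρtr, hPT, hsum]
        field_simp
        norm_num
      rw [hval]
      constructor
      · intro h; norm_num at h
      · rintro ⟨_, h2⟩; exact absurd huP (h2 u hu)
    · push_neg at hp hm
      have hsum : ∑ s : S, (P * ((s : (MatN n)ˣ) : MatN n)).trace = 0 :=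
        Finset.sum_eq_zero fun s _ => by
          rcases htri s with h | h | h
          · exact h
          · exact absurd h (hp _ s.2)
          · exact absurd h (hm _ s.2)
      have hval : (E * ρ).trace = 1 / 2 := by
        rw [hEρ, hρtr, hPT, hsum, add_zero]
        field_simp
      exact ⟨fun _ => ⟨hp, hm⟩, fun _ => hval⟩
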